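/- A user at source s_i using the indirect path via s_l has no incentive to deviate to its direct path if and only if u_l + v_l q̄ ≤ q̄(u_i + 1 + v_i q̄) - qμ/φ. -/

import Mathlib

/-- A user at source `s_i` using the indirect path via `s_l` (current loss rate
`φ(q + q̄(u_lφ + v_l q̄ φ)/(u_lφ + v_l q̄ φ + μ))`) has no incentive to deviate to
its direct path (post-deviation loss rate
`φ((u_i+1)φ + v_i q̄ φ)/((u_i+1)φ + v_i q̄ φ + μ)`)
if and only if `u_l + v_l q̄ ≤ q̄(u_i + 1 + v_i q̄) - qμ/φ`. -/
theorem IP_no_deviation_iff (φ μ q : ℝ) (hφ : 0 < φ) (hμ : 0 < μ)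
    (hq0 : 0 < q) (hq1 : q < 1) (ui vi ul vl : ℕ) :
    (φ * (q + (1 - q) * ((ul : ℝ) * φ + (vl : ℝ) * (1 - q) * φ) /
          ((ul : ℝ) * φ + (vl : ℝ) * (1 - q) * φ + μ)) ≤
        φ * (((ui : ℝ) + 1) * φ + (vi : ℝ) * (1 - q) * φ) /
          (((ui : ℝ) + 1) * φ + (vi : ℝ) * (1 - q) * φ + μ)) ↔
      (ul : ℝ) + (vl : ℝ) * (1 - q) ≤
        (1 - q) * ((ui : ℝ) + 1 + (vi : ℝ) * (1 - q)) - q * μ / φ := by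
  set A : ℝ := (ul : ℝ) * φ + (vl : ℝ) * (1 - q) * φ with hAdef
  set B : ℝ := ((ui : ℝ) + 1) * φ + (vi : ℝ) * (1 - q) * φ with hBdef
  have hq1' : 0 < 1 - q := by linarith
  have hA : 0 ≤ A := by
    have h1 : (0:ℝ) ≤ (ul : ℝ) := Nat.cast_nonneg _
    have h2 : (0:ℝ) ≤ (vl : ℝ) := Nat.cast_nonneg _
    have := mul_nonneg (mul_nonneg h2 hq1'.le) hφ.le
    nlinarith
  have hAμ : 0 < A + μ := by linarith
  have hB : 0 < B := by
    have h1 : (0:ℝ) ≤ (ui : ℝ) := Nat.cast_nonneg _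
    have h2 : (0:ℝ) ≤ (vi : ℝ) := Nat.cast_nonneg _
    have := mul_nonneg (mul_nonneg h2 hq1'.le) hφ.le
    nlinarith
  have hBμ : 0 < B + μ := by linarith
  have e1 : q + (1 - q) * A / (A + μ) = (A + q * μ) / (A + μ) := by
    field_simp
    ring
  rw [e1, mul_div_assoc, mul_le_mul_iff_right₀ hφ, div_le_div_iff₀ hAμ hBμ]
  have hdf : q * μ / φ * φ = q * μ := div_mul_cancel₀ _ hφ.ne'
  constructor
  · intro h
    have h2 : A + q * μ ≤ (1 - q) * B := by nlinarith
    have h3 : φ * ((ul : ℝ) + (vl : ℝ) * (1 - q)) + q * μ ≤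
        φ * ((1 - q) * ((ui : ℝ) + 1 + (vi : ℝ) * (1 - q))) := by
      rw [hAdef, hBdef] at h2; nlinarith
    nlinarith
  · intro h
    have h3 : φ * ((ul : ℝ) + (vl : ℝ) * (1 - q)) + q * μ ≤
        φ * ((1 - q) * ((ui : ℝ) + 1 + (vi : ℝ) * (1 - q))) := by
      nlinarith
    have h2 : A + q * μ ≤ (1 - q) * B := by
      rw [hAdef, hBdef]; nlinarith
    nlinarith
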